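/- Let A and B be two DFAs over the same alphabet Σ with disjoint state sets, initial states p₀ and q₀, let R = {(p,q) ∈ Q₁ × Q₂ | ∃ x ∈ Σ*, δ₁(p₀,x) = p ∧ δ₂(q₀,x) = q}, and let R* be the smallest equivalence relation on Q₁ ⊔ Q₂ containing R. Then A and B accept the same language if and only if for every pair (p,q) ∈ R*, ε(p) = ε(q). -/

import Mathlib

/-- The relation `R` of pairs of states of the two DFAs reachable by a common word,
viewed as a relation on the disjoint union of the state sets. -/
def sumReachPairs {α σ₁ σ₂ : Type} (A : DFA α σ₁) (B : DFA α σ₂) :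
    (σ₁ ⊕ σ₂) → (σ₁ ⊕ σ₂) → Prop :=
  fun r s => ∃ p q, r = Sum.inl p ∧ s = Sum.inr q ∧
    ∃ x : List α, A.evalFrom A.start x = p ∧ B.evalFrom B.start x = q

/-- Finality (`ε`) on the disjoint union of the state sets. -/
def sumEps {α σ₁ σ₂ : Type} (A : DFA α σ₁) (B : DFA α σ₂) : (σ₁ ⊕ σ₂) → Prop :=
  Sum.elim (· ∈ A.accept) (· ∈ B.accept)

/-- the DFAs accept the same language iff all pairs in the equivalence
closure `R*` of `R` agree on finality. -/
theorem dfa_equiv_iff_eqvGen_agree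
    {α σ₁ σ₂ : Type} [Fintype σ₁] [Fintype σ₂]
    (A : DFA α σ₁) (B : DFA α σ₂) :
    A.accepts = B.accepts ↔
      (∀ r s, Relation.EqvGen (sumReachPairs A B) r s →
        (sumEps A B r ↔ sumEps A B s)) := by
  constructor
  · intro h r s hrs
    induction hrs with
    | rel r s hr =>
      obtain ⟨p, q, rfl, rfl, x, rfl, rfl⟩ := hr
      have : x ∈ A.accepts ↔ x ∈ B.accepts := by rw [h]
      simpa [sumEps, DFA.mem_accepts, DFA.eval] using this
    | refl => exact Iff.rfl
    | symm _ _ _ ih => exact ih.symm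
    | trans _ _ _ _ _ ih1 ih2 => exact ih1.trans ih2
  · intro h
    ext x
    have := h (Sum.inl (A.evalFrom A.start x)) (Sum.inr (B.evalFrom B.start x))
      (Relation.EqvGen.rel _ _ ⟨_, _, rfl, rfl, x, rfl, rfl⟩)
    simpa [sumEps, DFA.mem_accepts, DFA.eval] using this
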